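/- Let G be a DAG, A and B distinct vertices, and C a minimal set d-separating A and B (A ⊥_d B | C, but A and B are d-connected given every proper subset of C). Then every vertex of C is an ancestor of A or of B. -/

import Mathlib

variable {V : Type*}

/-- `Ancestor E x y`: there is a (possibly trivial) directed path from `x` to `y`. -/
def Ancestor (E : V → V → Prop) (x y : V) : Prop :=
  Relation.ReflTransGen E x y

/-- A directed graph is acyclic (a DAG) if it has no directed cycles. -/
def Acyclic (E : V → V → Prop) : Prop :=
  ∀ v : V, ¬ Relation.TransGen E v v

/-- `v` is a collider on the path (vertex list) `l`. -/
def ColliderOn (E : V → V → Prop) (l : List V) (v : V) : Prop :=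
  ∃ x y : V, [x, v, y] <:+: l ∧ E x v ∧ E y v

/-- `v` is an interior non-collider on the path `l`. -/
def NonColliderOn (E : V → V → Prop) (l : List V) (v : V) : Prop :=
  (∃ x y : V, [x, v, y] <:+: l) ∧ ¬ ColliderOn E l v

/-- `l` is a path between `a` and `b` that is active given the conditioning set `C`:
every collider on `l` has a descendant in `C` and no non-collider on `l` is in `C`. -/
def ActivePath (E : V → V → Prop) (C : Set V) (a b : V) (l : List V) : Prop :=
  l.head? = some a ∧ l.getLast? = some b ∧ l.Nodup ∧
  l.Chain' (fun u v => E u v ∨ E v u) ∧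
  (∀ v, ColliderOn E l v → ∃ d ∈ C, Ancestor E v d) ∧
  (∀ v, NonColliderOn E l v → v ∉ C)

/-- `a` and `b` are d-connected given `C`. -/
def DConn (E : V → V → Prop) (C : Set V) (a b : V) : Prop :=
  ∃ l : List V, ActivePath E C a b l

/-- `a` and `b` are d-separated given `C`. -/
def DSep (E : V → V → Prop) (C : Set V) (a b : V) : Prop :=
  ¬ DConn E C a b

section Aux

variable {E : V → V → Prop}

private lemma collider_of_infix {l m : List V} (h : m <:+: l) {v : V}
    (hc : ColliderOn E m v) : ColliderOn E l v := by
  obtain ⟨x, y, hxy, h1, h2⟩ := hc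
  exact ⟨x, y, hxy.trans h, h1, h2⟩

/-- Following a forward edge along an (undirected) chain, one either reaches the last
vertex by a directed path, or reaches a collider of the chain by a directed path. -/
private lemma fwd_run : ∀ (l : List V) (v u : V), E v u →
    List.Chain' (fun a b => E a b ∨ E b a) (v :: u :: l) →
    (∃ b, (v :: u :: l).getLast? = some b ∧ Relation.ReflTransGen E v b) ∨
    ∃ w, ColliderOn E (v :: u :: l) w ∧ Relation.ReflTransGen E v w := by
  intro l
  induction l with
  | nil =>
    intro v u hvu _
    exact Or.inl ⟨u, rfl, Relation.ReflTransGen.single hvu⟩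
  | cons z l ih =>
    intro v u hvu hch
    have hch' : List.Chain' (fun a b => E a b ∨ E b a) (u :: z :: l) :=
      (List.isChain_cons_cons.mp hch).2
    rcases (List.isChain_cons_cons.mp hch').1 with huz | hzu
    · rcases ih u z huz hch' with ⟨b, hb, hanc⟩ | ⟨w, hw, hanc⟩
      · exact Or.inl ⟨b, by simpa [List.getLast?_cons_cons] using hb,
          (Relation.ReflTransGen.single hvu).trans hanc⟩
      · refine Or.inr ⟨w, collider_of_infix ?_ hw,
          (Relation.ReflTransGen.single hvu).trans hanc⟩
        exact (List.suffix_cons v (u :: z :: l)).isInfix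
    · refine Or.inr ⟨u, ⟨v, z, ⟨[], l, by simp⟩, hvu, hzu⟩,
        Relation.ReflTransGen.single hvu⟩

/-- On a path active given `C ∩ (An A ∪ An B)`, every interior non-collider is an
ancestor of `A` or of `B`. -/
private lemma noncollider_anc {C : Set V} {A B : V} {l : List V}
    (hl : ActivePath E (C ∩ {v | Ancestor E v A ∨ Ancestor E v B}) A B l) :
    ∀ v, NonColliderOn E l v → Ancestor E v A ∨ Ancestor E v B := by
  obtain ⟨h1, h2, _h3, h4, h5, _h6⟩ := hl
  intro v hv
  obtain ⟨⟨x, y, hinf⟩, hnc⟩ := hv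
  obtain ⟨s, t, hst⟩ := hinf
  -- the two edges at `v`
  have hch3 : List.Chain' (fun a b => E a b ∨ E b a) [x, v, y] :=
    h4.infix ⟨s, t, hst⟩
  have hxv : E x v ∨ E v x := (List.isChain_cons_cons.mp hch3).1
  have hvy : E v y ∨ E y v := (List.isChain_cons_cons.mp (List.isChain_cons_cons.mp hch3).2).1
  -- reduce an ancestor-of-a-collider to the conclusion
  have collider_case : ∀ w, ColliderOn E l w → Relation.ReflTransGen E v w →
      Ancestor E v A ∨ Ancestor E v B := by
    intro w hw hvw
    obtain ⟨d, hd, hwd⟩ := h5 w hw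
    rcases hd.2 with hdA | hdB
    · exact Or.inl ((hvw.trans hwd).trans hdA)
    · exact Or.inr ((hvw.trans hwd).trans hdB)
  have hvy' : E v y ∨ E v x := by
    rcases hvy with h | hyv
    · exact Or.inl h
    · rcases hxv with hxv | hvx
      · exact absurd ⟨x, y, ⟨s, t, hst⟩, hxv, hyv⟩ hnc
      · exact Or.inr hvx
  rcases hvy' with hvy | hvx
  · -- run forward towards `B`
    have hsuf : (v :: y :: t) <:+ l := ⟨s ++ [x], by simpa using hst⟩
    have hch : List.Chain' (fun a b => E a b ∨ E b a) (v :: y :: t) := h4.suffix hsuf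
    rcases fwd_run t v y hvy hch with ⟨b, hb, hanc⟩ | ⟨w, hw, hanc⟩
    · have : l.getLast? = some b := by
        obtain ⟨m, hm⟩ := hsuf
        rw [← hm, List.getLast?_append_of_ne_nil m (by simp)]
        exact hb
      rw [h2] at this
      exact Or.inr (by simpa using (Option.some_injective _ this ▸ hanc : _))
    · exact collider_case w (collider_of_infix hsuf.isInfix hw) hanc
  · -- run backward towards `A`
    have hpre : (s ++ [x, v]) <+: l := ⟨y :: t, by simpa [List.append_assoc] using hst⟩
    have hrev : (s ++ [x, v]).reverse = v :: x :: s.reverse := by simp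
    have hch : List.Chain' (fun a b => E a b ∨ E b a) (v :: x :: s.reverse) := by
      rw [← hrev]
      refine List.isChain_reverse.mpr ?_
      exact ((h4.prefix hpre).imp fun a b h => h.symm)
    rcases fwd_run s.reverse v x hvx hch with ⟨b, hb, hanc⟩ | ⟨w, hw, hanc⟩
    · have hgl : (v :: x :: s.reverse).getLast? = (s ++ [x, v]).head? := by
        rw [← hrev]; exact List.getLast?_reverse
      have : l.head? = some b := by
        obtain ⟨m, hm⟩ := hpre
        rw [← hm, List.head?_append_of_ne_nil _ (by simp)]
        rw [hgl] at hb
        exact hb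
      rw [h1] at this
      exact Or.inl (by simpa using (Option.some_injective _ this ▸ hanc : _))
    · -- transport the collider from the reversed prefix back to `l`
      obtain ⟨p, q, hpq, hp, hq⟩ := hw
      have hpq' : [q, w, p] <:+: (s ++ [x, v]) := by
        have := hpq.reverse
        simpa [hrev] using this
      exact collider_case w ⟨q, p, hpq'.trans hpre.isInfix, hq, hp⟩ hanc

/-- A path active given `C ∩ (An A ∪ An B)` is active given `C`. -/
private lemma active_of_active_inter {C : Set V} {A B : V} {l : List V}
    (hl : ActivePath E (C ∩ {v | Ancestor E v A ∨ Ancestor E v B}) A B l) :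
    ActivePath E C A B l := by
  obtain ⟨h1, h2, h3, h4, h5, h6⟩ := hl
  refine ⟨h1, h2, h3, h4, ?_, ?_⟩
  · intro w hw
    obtain ⟨d, hd, hwd⟩ := h5 w hw
    exact ⟨d, hd.1, hwd⟩
  · intro v hv hvC
    exact h6 v hv ⟨hvC, noncollider_anc ⟨h1, h2, h3, h4, h5, h6⟩ v hv⟩

end Aux

/-- Every vertex of a minimal d-separating set for `A` and `B` is an ancestor of `A` or of `B`. -/
theorem stmt_5 (E : V → V → Prop) (hacyc : Acyclic E) (A B : V) (C : Set V)
    (hne : A ≠ B) (hA : A ∉ C) (hB : B ∉ C)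
    (hsep : DSep E C A B)
    (hmin : ∀ C' : Set V, C' ⊂ C → DConn E C' A B) :
    ∀ c ∈ C, Ancestor E c A ∨ Ancestor E c B := by
  intro c hc
  by_contra hcon
  have hss : C ∩ {v | Ancestor E v A ∨ Ancestor E v B} ⊂ C := by
    refine ⟨Set.inter_subset_left, fun hsub => hcon (hsub hc).2⟩
  obtain ⟨l, hl⟩ := hmin _ hss
  exact hsep ⟨l, active_of_active_inter hl⟩
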